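/- arXiv:math/0702593 — 5 statements merged into one kernel-verified Lean document; each statement's English description precedes it below -/
import Mathlib

section
/- Let K be a field complete with respect to a nontrivial non-archimedean absolute value, with valuation ring R a discrete valuation ring. Let φ = Σ_{i≥1} c_i X^i ∈ K⟦X⟧ be a formal power series with zero constant term such that |c₁| ≤ 1 (i.e. φ'(0) ∈ R). If r ∈ (0,1] is a radius at which the graph of φ is analytically trivialized, then for every real number s with 0 < s < r one has |c_i| s^i → 0 as i → ∞; in other words, the radius of convergence of φ is at least r. (This is Proposition 3.6, part 1: the radius of convergence of φ is at least the size of its graph with respect to the model 𝔸²_R.) -/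
noncomputable section

open Filter PowerSeries

namespace NA

/-- The valuation ring `R = {x : K | ‖x‖ ≤ 1}` of a nonarchimedean normed field. -/
def integers (K : Type*) [NormedField K] [IsUltrametricDist K] : Subring K where
  carrier := {x : K | ‖x‖ ≤ 1}
  mul_mem' {a b} ha hb := by
    simp only [Set.mem_setOf_eq, norm_mul] at *
    calc ‖a‖ * ‖b‖ ≤ 1 * 1 := mul_le_mul ha hb (norm_nonneg _) zero_le_one
    _ = 1 := one_mul 1
  one_mem' := by simp
  add_mem' {a b} ha hb := (IsUltrametricDist.norm_add_le_max a b).trans (max_le ha hb)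
  zero_mem' := by simp
  neg_mem' {a} ha := by simpa using ha

/-- Composition `φ ∘ ψ` of formal power series in one variable
(this gives `φ(ψ)` whenever `ψ` has zero constant term). -/
def comp {K : Type*} [CommSemiring K] (φ ψ : PowerSeries K) : PowerSeries K :=
  PowerSeries.mk fun n =>
    ∑ k ∈ Finset.range (n + 1), PowerSeries.coeff k φ * PowerSeries.coeff n (ψ ^ k)

/-- The one-variable series `T ↦ f(T, 0)` obtained from a two-variable series `f`. -/
def line1 {K : Type*} [CommSemiring K] (f : MvPowerSeries (Fin 2) K) : PowerSeries K :=
  PowerSeries.mk fun n => MvPowerSeries.coeff (Finsupp.single (0 : Fin 2) n) f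

/-- The statement `‖f‖_r ≤ c`, where `‖f‖_r = sup_I ‖a_I‖ r^{|I|}` is the Gauss norm of the
multivariate formal power series `f = Σ_I a_I X^I`. -/
def NormLE {K : Type*} [NormedField K] {N : ℕ} (r : ℝ) (f : MvPowerSeries (Fin N) K)
    (c : ℝ) : Prop :=
  ∀ I : Fin N →₀ ℕ, ‖MvPowerSeries.coeff I f‖ * r ^ (∑ j, I j) ≤ c

/-- The graph of `φ` is analytically trivialized at radius `r`: there is a pair
`f = (f₁, f₂)` of two-variable power series, vanishing at the origin, with `‖f_j‖_r ≤ r`,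
whose Jacobian matrix at the origin lies in `GL₂(R)` (entries of norm `≤ 1`, determinant of
norm `1`), and such that `f₂(T,0) = φ(f₁(T,0))`. -/
def GraphTrivAt {K : Type*} [NormedField K] (φ : PowerSeries K) (r : ℝ) : Prop :=
  ∃ f₁ f₂ : MvPowerSeries (Fin 2) K,
    MvPowerSeries.constantCoeff f₁ = 0 ∧
    MvPowerSeries.constantCoeff f₂ = 0 ∧
    NormLE r f₁ r ∧ NormLE r f₂ r ∧
    ‖MvPowerSeries.coeff (Finsupp.single (0 : Fin 2) 1) f₁‖ ≤ 1 ∧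
    ‖MvPowerSeries.coeff (Finsupp.single (1 : Fin 2) 1) f₁‖ ≤ 1 ∧
    ‖MvPowerSeries.coeff (Finsupp.single (0 : Fin 2) 1) f₂‖ ≤ 1 ∧
    ‖MvPowerSeries.coeff (Finsupp.single (1 : Fin 2) 1) f₂‖ ≤ 1 ∧
    ‖MvPowerSeries.coeff (Finsupp.single (0 : Fin 2) 1) f₁ *
        MvPowerSeries.coeff (Finsupp.single (1 : Fin 2) 1) f₂ -
      MvPowerSeries.coeff (Finsupp.single (1 : Fin 2) 1) f₁ *
        MvPowerSeries.coeff (Finsupp.single (0 : Fin 2) 1) f₂‖ = 1 ∧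
    line1 f₂ = comp φ (line1 f₁)

end NA

namespace NAProof

variable {K : Type*} [NormedField K] [IsUltrametricDist K]

lemma norm_coeff_pow_le (ψ : PowerSeries K) {r : ℝ} (hr0 : 0 < r)
    (hψ : ∀ m : ℕ, ‖PowerSeries.coeff m ψ‖ ≤ r ^ ((1:ℤ) - m)) :
    ∀ k n : ℕ, ‖PowerSeries.coeff n (ψ ^ k)‖ ≤ r ^ ((k:ℤ) - n) := by
  intro k
  induction k with
  | zero =>
    intro n
    rcases Nat.eq_zero_or_pos n with rfl | hn
    · simp
    · rw [pow_zero, PowerSeries.coeff_one, if_neg (Nat.pos_iff_ne_zero.mp hn)]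
      simp only [norm_zero]
      positivity
  | succ k ih =>
    intro n
    rw [pow_succ, PowerSeries.coeff_mul]
    apply IsUltrametricDist.norm_sum_le_of_forall_le_of_nonneg (le_of_lt (zpow_pos hr0 _))
    intro p hp
    rw [Finset.HasAntidiagonal.mem_antidiagonal] at hp
    rw [norm_mul]
    calc ‖(PowerSeries.coeff p.1) (ψ ^ k)‖ * ‖(PowerSeries.coeff p.2) ψ‖
        ≤ r ^ ((k:ℤ) - p.1) * r ^ ((1:ℤ) - p.2) :=
          mul_le_mul (ih p.1) (hψ p.2) (norm_nonneg _) (le_of_lt (zpow_pos hr0 _))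
      _ = r ^ ((↑(k+1):ℤ) - n) := by
          rw [← zpow_add₀ (ne_of_gt hr0)]
          congr 1
          push_cast
          omega

lemma coeff_pow_eq_zero_of_lt {R : Type*} [CommRing R] (ψ : PowerSeries R)
    (h0 : PowerSeries.constantCoeff ψ = 0) :
    ∀ k n : ℕ, n < k → PowerSeries.coeff n (ψ ^ k) = 0 := by
  intro k
  induction k with
  | zero => intro n hn; omega
  | succ k ih =>
    intro n hn
    rw [pow_succ, PowerSeries.coeff_mul]
    apply Finset.sum_eq_zero
    intro p hp
    rw [Finset.HasAntidiagonal.mem_antidiagonal] at hp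
    rcases lt_or_ge p.1 k with h | h
    · rw [ih p.1 h, zero_mul]
    · have hp2 : p.2 = 0 := by omega
      rw [hp2, PowerSeries.coeff_zero_eq_constantCoeff, h0, mul_zero]

lemma coeff_pow_self {R : Type*} [CommRing R] (ψ : PowerSeries R)
    (h0 : PowerSeries.constantCoeff ψ = 0) :
    ∀ k : ℕ, PowerSeries.coeff k (ψ ^ k) = (PowerSeries.coeff 1 ψ) ^ k := by
  intro k
  induction k with
  | zero => simp
  | succ k ih =>
    rw [pow_succ, PowerSeries.coeff_mul]
    rw [Finset.sum_eq_single_of_mem (k, 1) (by rw [Finset.HasAntidiagonal.mem_antidiagonal])]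
    · rw [ih, pow_succ]
    · intro p hp hne
      rw [Finset.HasAntidiagonal.mem_antidiagonal] at hp
      rcases lt_or_ge p.1 k with h | h
      · rw [coeff_pow_eq_zero_of_lt ψ h0 k p.1 h, zero_mul]
      · have : p.1 = k + 1 := by
          rcases Nat.eq_or_lt_of_le h with h' | h'
          · exfalso; apply hne; have : p.2 = 1 := by omega
            exact Prod.ext h'.symm this
          · omega
        have hp2 : p.2 = 0 := by omega
        rw [hp2, PowerSeries.coeff_zero_eq_constantCoeff, h0, mul_zero]

end NAProof

/-- **Proposition 3.6, part 1** (Bost–Chambert-Loir): over a complete discretely valued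
nonarchimedean field `K` with valuation ring `R`, if `φ ∈ K⟦X⟧` has zero constant term and
`φ'(0) ∈ R`, and if `r ∈ (0,1]` is a radius at which the graph of `φ` is analytically
trivialized, then the radius of convergence of `φ` is at least `r`: for every `s` with
`0 < s < r`, `‖c_i‖ s^i → 0` as `i → ∞`. -/
theorem radius_of_convergence_ge_size
    {K : Type*} [NontriviallyNormedField K] [CompleteSpace K] [IsUltrametricDist K]
    [IsDiscreteValuationRing (NA.integers K)]
    (φ : PowerSeries K) (hφ0 : PowerSeries.constantCoeff φ = 0)
    (hc1 : ‖PowerSeries.coeff 1 φ‖ ≤ 1)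
    (r : ℝ) (hr : r ∈ Set.Ioc (0 : ℝ) 1) (htriv : NA.GraphTrivAt φ r)
    (s : ℝ) (hs0 : 0 < s) (hsr : s < r) :
    Filter.Tendsto (fun i : ℕ => ‖PowerSeries.coeff i φ‖ * s ^ i)
      Filter.atTop (nhds 0) := by
  obtain ⟨hr0, hr1⟩ := hr
  obtain ⟨f₁, f₂, h10, h20, hn1, hn2, hA, hB, hC, hD, hdet, hcomp⟩ := htriv
  set ψ := NA.line1 f₁ with hψdef
  set χ := NA.line1 f₂ with hχdef
  have hcoeffψ : ∀ n : ℕ, PowerSeries.coeff n ψ =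
      MvPowerSeries.coeff (Finsupp.single (0 : Fin 2) n) f₁ := fun n => by
    simp [hψdef, NA.line1, PowerSeries.coeff_mk]
  have hcoeffχ : ∀ n : ℕ, PowerSeries.coeff n χ =
      MvPowerSeries.coeff (Finsupp.single (0 : Fin 2) n) f₂ := fun n => by
    simp [hχdef, NA.line1, PowerSeries.coeff_mk]
  have hsum : ∀ n : ℕ, (∑ j : Fin 2, (Finsupp.single (0 : Fin 2) n) j) = n := by
    intro n
    simp [Fin.sum_univ_two, Finsupp.single_apply]
  have key : ∀ f : MvPowerSeries (Fin 2) K, NA.NormLE r f r → ∀ m : ℕ,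
      ‖MvPowerSeries.coeff (Finsupp.single (0 : Fin 2) m) f‖ ≤ r ^ ((1:ℤ) - m) := by
    intro f hf m
    have h := hf (Finsupp.single (0 : Fin 2) m)
    rw [hsum] at h
    rw [show r ^ ((1:ℤ) - m) = r / r ^ m by
      rw [zpow_sub₀ (ne_of_gt hr0), zpow_one, zpow_natCast]]
    rw [le_div_iff₀ (pow_pos hr0 m)]
    exact h
  have hψb : ∀ m : ℕ, ‖PowerSeries.coeff m ψ‖ ≤ r ^ ((1:ℤ) - m) := fun m => by
    rw [hcoeffψ m]; exact key f₁ hn1 m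
  have hχb : ∀ m : ℕ, ‖PowerSeries.coeff m χ‖ ≤ r ^ ((1:ℤ) - m) := fun m => by
    rw [hcoeffχ m]; exact key f₂ hn2 m
  have hψ0 : PowerSeries.constantCoeff ψ = 0 := by
    rw [← PowerSeries.coeff_zero_eq_constantCoeff, hcoeffψ 0, Finsupp.single_zero,
      MvPowerSeries.coeff_zero_eq_constantCoeff, h10]
  have hcompc : ∀ n : ℕ, PowerSeries.coeff n χ =
      ∑ k ∈ Finset.range (n + 1),
        PowerSeries.coeff k φ * PowerSeries.coeff n (ψ ^ k) := by
    intro n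
    rw [hcomp]
    simp [NA.comp, PowerSeries.coeff_mk]
  have hχ1 : PowerSeries.coeff 1 χ =
      PowerSeries.coeff 1 φ * PowerSeries.coeff 1 ψ := by
    rw [hcompc 1, Finset.sum_range_succ, Finset.sum_range_one]
    rw [PowerSeries.coeff_zero_eq_constantCoeff_apply, hφ0, zero_mul, zero_add, pow_one]
  have ha1 : ‖PowerSeries.coeff 1 ψ‖ = 1 := by
    have hCval : MvPowerSeries.coeff (Finsupp.single (0 : Fin 2) 1) f₂ =
        PowerSeries.coeff 1 φ * PowerSeries.coeff 1 ψ := by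
      rw [← hcoeffχ 1, hχ1]
    rw [hCval] at hdet
    have hfac : MvPowerSeries.coeff (Finsupp.single (0 : Fin 2) 1) f₁ *
        MvPowerSeries.coeff (Finsupp.single (1 : Fin 2) 1) f₂ -
        MvPowerSeries.coeff (Finsupp.single (1 : Fin 2) 1) f₁ *
        (PowerSeries.coeff 1 φ * PowerSeries.coeff 1 ψ) =
        PowerSeries.coeff 1 ψ *
          (MvPowerSeries.coeff (Finsupp.single (1 : Fin 2) 1) f₂ -
            MvPowerSeries.coeff (Finsupp.single (1 : Fin 2) 1) f₁ *
              PowerSeries.coeff 1 φ) := by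
      rw [← hcoeffψ 1]; ring
    rw [hfac, norm_mul] at hdet
    have hle2 : ‖MvPowerSeries.coeff (Finsupp.single (1 : Fin 2) 1) f₂ -
        MvPowerSeries.coeff (Finsupp.single (1 : Fin 2) 1) f₁ *
          PowerSeries.coeff 1 φ‖ ≤ 1 := by
      rw [sub_eq_add_neg]
      refine (IsUltrametricDist.norm_add_le_max _ _).trans (max_le hD ?_)
      rw [norm_neg, norm_mul]
      calc ‖MvPowerSeries.coeff (Finsupp.single (1 : Fin 2) 1) f₁‖ *
            ‖PowerSeries.coeff 1 φ‖ ≤ 1 * 1 :=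
          mul_le_mul hB hc1 (norm_nonneg _) zero_le_one
        _ = 1 := one_mul 1
    have hge : (1:ℝ) ≤ ‖PowerSeries.coeff 1 ψ‖ := by
      nlinarith [norm_nonneg (PowerSeries.coeff 1 ψ)]
    have hle : ‖PowerSeries.coeff 1 ψ‖ ≤ 1 := by rw [hcoeffψ 1]; exact hA
    linarith
  have hφb : ∀ n : ℕ, ‖PowerSeries.coeff n φ‖ ≤ r ^ ((1:ℤ) - n) := by
    intro n
    induction n using Nat.strong_induction_on with
    | _ n ih =>
      rcases Nat.eq_zero_or_pos n with rfl | hn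
      · rw [PowerSeries.coeff_zero_eq_constantCoeff_apply, hφ0, norm_zero]
        positivity
      · have hsplit := hcompc n
        rw [Finset.sum_range_succ, NAProof.coeff_pow_self ψ hψ0 n] at hsplit
        have heq : PowerSeries.coeff n φ * (PowerSeries.coeff 1 ψ) ^ n =
            PowerSeries.coeff n χ - ∑ k ∈ Finset.range n,
              PowerSeries.coeff k φ * PowerSeries.coeff n (ψ ^ k) := by
          rw [hsplit]; ring
        have hnorm : ‖PowerSeries.coeff n φ‖ =
            ‖PowerSeries.coeff n φ * (PowerSeries.coeff 1 ψ) ^ n‖ := by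
          rw [norm_mul, norm_pow, ha1, one_pow, mul_one]
        rw [hnorm, heq]
        have hsumb : ‖∑ k ∈ Finset.range n,
            PowerSeries.coeff k φ * PowerSeries.coeff n (ψ ^ k)‖ ≤ r ^ ((1:ℤ) - n) := by
          apply IsUltrametricDist.norm_sum_le_of_forall_le_of_nonneg
            (le_of_lt (zpow_pos hr0 _))
          intro k hk
          rw [Finset.mem_range] at hk
          rw [norm_mul]
          calc ‖PowerSeries.coeff k φ‖ * ‖PowerSeries.coeff n (ψ ^ k)‖
              ≤ r ^ ((1:ℤ) - k) * r ^ ((k:ℤ) - n) :=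
              mul_le_mul (ih k hk) (NAProof.norm_coeff_pow_le ψ hr0 hψb k n)
                (norm_nonneg _) (le_of_lt (zpow_pos hr0 _))
            _ = r ^ ((1:ℤ) - n) := by
                rw [← zpow_add₀ (ne_of_gt hr0)]
                congr 1
                ring
        rw [sub_eq_add_neg]
        refine (IsUltrametricDist.norm_add_le_max _ _).trans (max_le (hχb n) ?_)
        rw [norm_neg]
        exact hsumb
  have hbound : ∀ i : ℕ, ‖PowerSeries.coeff i φ‖ * s ^ i ≤ r * (s / r) ^ i := by
    intro i
    have h1 : ‖PowerSeries.coeff i φ‖ * s ^ i ≤ r ^ ((1:ℤ) - i) * s ^ i :=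
      mul_le_mul_of_nonneg_right (hφb i) (pow_nonneg hs0.le i)
    refine h1.trans_eq ?_
    rw [zpow_sub₀ (ne_of_gt hr0), zpow_one, zpow_natCast, div_pow]
    field_simp
  have hgeom : Filter.Tendsto (fun i : ℕ => r * (s / r) ^ i) Filter.atTop (nhds 0) := by
    have h := (tendsto_pow_atTop_nhds_zero_of_lt_one (div_nonneg hs0.le hr0.le)
      ((div_lt_one hr0).mpr hsr)).const_mul r
    simpa using h
  exact squeeze_zero (fun i => mul_nonneg (norm_nonneg _) (pow_nonneg hs0.le i)) hbound hgeom
end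
end

section
/- Let K be a field complete with respect to a nontrivial non-archimedean absolute value, with valuation ring R a discrete valuation ring. Let φ = Σ_{i≥1} c_i X^i ∈ K⟦X⟧ have positive radius of convergence and satisfy |c₁| = 1 (i.e. φ'(0) is a unit of R). Define λ₁ = inf_{i≥1} (−log|c_{i+1}|)/i ∈ (−∞, +∞], with the convention −log 0 = +∞ (so λ₁ = +∞ when c_{i+1} = 0 for all i ≥ 1). Then the supremum of the set of all r ∈ (0,1] at which the graph of φ is analytically trivialized equals min(1, exp λ₁). (This is Proposition 3.6, part 2: the size of the graph of φ with respect to 𝔸²_R equals min(1, exp λ₁), where λ₁ is the first slope of the Newton polygon of φ(x)/x.) -/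
noncomputable section

open Filter PowerSeries

namespace NA

/-- The term `(−log ‖c_{i+1}‖)/i` of the Newton polygon slope (with the convention
`−log 0 = +∞`), as an extended real number; here `x = ‖c_{i+1}‖` and `i ≥ 1`. -/
def slopeTerm (x : ℝ) (i : ℕ) : EReal :=
  if x = 0 then ⊤ else (((-Real.log x) / (i : ℝ) : ℝ) : EReal)

/-- The first slope `λ₁ = inf_{i ≥ 1} (−log ‖c_{i+1}‖)/i ∈ (−∞, +∞]` of the Newton polygon of
`φ(x)/x`, for `φ = Σ_{i≥1} c_i X^i` (the infimum is reindexed by `i = j + 1`, `j : ℕ`). -/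
def firstSlope {K : Type*} [NormedField K] (φ : PowerSeries K) : EReal :=
  ⨅ j : ℕ, slopeTerm ‖PowerSeries.coeff (j + 2) φ‖ (j + 1)

/-- `min(1, exp λ)` for an extended real number `λ`. -/
def minOneExp (l : EReal) : ℝ :=
  if l = ⊤ then 1 else if l = ⊥ then 0 else min 1 (Real.exp l.toReal)

end NA


namespace NA

theorem log_le_slopeTerm_iff (x r : ℝ) (hx : 0 ≤ x) (hr0 : 0 < r) (i : ℕ) (hi : 0 < i) :
    ((Real.log r : ℝ) : EReal) ≤ slopeTerm x i ↔ x * r ^ i ≤ 1 := by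
  unfold slopeTerm
  rcases eq_or_lt_of_le hx with hx0 | hx0
  · simp [← hx0, le_top]
  · rw [if_neg (ne_of_gt hx0), EReal.coe_le_coe_iff,
      le_div_iff₀ (by exact_mod_cast hi)]
    rw [show Real.log r * i = Real.log (r ^ i) by rw [Real.log_pow]; ring]
    constructor
    · intro h
      have : Real.log (x * r ^ i) ≤ 0 := by
        rw [Real.log_mul (ne_of_gt hx0) (by positivity)]; linarith
      exact (Real.log_nonpos_iff (by positivity)).1 this
    · intro h
      have : Real.log (x * r ^ i) ≤ 0 := Real.log_nonpos (by positivity) h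
      rw [Real.log_mul (ne_of_gt hx0) (by positivity)] at this; linarith

theorem le_minOneExp_iff (l : EReal) (hl : l ≠ ⊥) (r : ℝ) (hr0 : 0 < r) (hr1 : r ≤ 1) :
    r ≤ minOneExp l ↔ ((Real.log r : ℝ) : EReal) ≤ l := by
  unfold minOneExp
  induction l with
  | bot => exact absurd rfl hl
  | coe y =>
    rw [if_neg (by simp), if_neg (by simp), le_min_iff, EReal.coe_le_coe_iff, EReal.toReal_coe]
    rw [← Real.log_le_iff_le_exp hr0]
    constructor
    · exact fun h => h.2
    · exact fun h => ⟨hr1, h⟩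
  | top => simp [hr1, le_top]

theorem minOneExp_pos (l : EReal) (hl : l ≠ ⊥) : 0 < minOneExp l := by
  unfold minOneExp
  rcases eq_or_ne l ⊤ with h|h
  · simp [h]
  · rw [if_neg h, if_neg hl]
    exact lt_min one_pos (Real.exp_pos _)

theorem minOneExp_le_one (l : EReal) : minOneExp l ≤ 1 := by
  unfold minOneExp
  rcases eq_or_ne l ⊤ with h|h
  · simp [h]
  · rw [if_neg h]
    rcases eq_or_ne l ⊥ with h2|h2
    · simp [h2]
    · rw [if_neg h2]; exact min_le_left _ _

theorem firstSlope_ne_bot {K : Type*} [NormedField K] (φ : PowerSeries K)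
    (hρ : ∃ s : ℝ, 0 < s ∧
      Filter.Tendsto (fun i : ℕ => ‖PowerSeries.coeff i φ‖ * s ^ i)
        Filter.atTop (nhds 0)) :
    firstSlope φ ≠ ⊥ := by
  obtain ⟨s, hs, ht⟩ := hρ
  obtain ⟨M, hM⟩ := ht.bddAbove_range
  simp only [mem_upperBounds, Set.mem_range, forall_exists_index] at hM
  set t : ℝ := min s 1 with htdef
  have ht0 : 0 < t := lt_min hs one_pos
  have ht1 : t ≤ 1 := min_le_right _ _
  set M' : ℝ := max M 1 with hM'def
  have hM'1 : 1 ≤ M' := le_max_right _ _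
  have hbound : ∀ i : ℕ, ‖PowerSeries.coeff i φ‖ * t ^ i ≤ M' := by
    intro i
    calc ‖PowerSeries.coeff i φ‖ * t ^ i ≤ ‖PowerSeries.coeff i φ‖ * s ^ i :=
          mul_le_mul_of_nonneg_left (pow_le_pow_left₀ (le_of_lt ht0) (min_le_left _ _) i)
            (norm_nonneg _)
      _ ≤ M := hM _ i rfl
      _ ≤ M' := le_max_left _ _
  set L : ℝ := 2 * Real.log t - Real.log M' with hLdef
  have key : ∀ j : ℕ, (L : EReal) ≤ slopeTerm ‖PowerSeries.coeff (j + 2) φ‖ (j + 1) := by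
    intro j
    unfold slopeTerm
    rcases eq_or_ne ‖PowerSeries.coeff (j + 2) φ‖ 0 with h0 | h0
    · simp [h0]
    · rw [if_neg h0, EReal.coe_le_coe_iff, le_div_iff₀ (by positivity)]
      have hc0 : 0 < ‖PowerSeries.coeff (j + 2) φ‖ := lt_of_le_of_ne (norm_nonneg _) (Ne.symm h0)
      have hlog : Real.log ‖PowerSeries.coeff (j + 2) φ‖ + ((j:ℝ) + 2) * Real.log t
          ≤ Real.log M' := by
        have := Real.log_le_log (by positivity : (0:ℝ) < ‖PowerSeries.coeff (j + 2) φ‖ * t ^ (j + 2)) (hbound (j + 2))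
        rwa [Real.log_mul (ne_of_gt hc0) (by positivity), Real.log_pow, Nat.cast_add,
          Nat.cast_ofNat] at this
      have hlt : Real.log t ≤ 0 := Real.log_nonpos (le_of_lt ht0) ht1
      have hlM : 0 ≤ Real.log M' := Real.log_nonneg hM'1
      have hj : (0:ℝ) ≤ (j:ℝ) := Nat.cast_nonneg j
      rw [hLdef]
      push_cast
      nlinarith
  have : (L : EReal) ≤ firstSlope φ := le_iInf key
  intro hbot
  rw [hbot] at this
  exact (EReal.bot_lt_coe L).ne' (le_antisymm this bot_le)

theorem graphTrivAt_of {K : Type*} [NormedField K] (φ : PowerSeries K)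
    (hφ0 : PowerSeries.constantCoeff φ = 0) (hc1 : ‖PowerSeries.coeff 1 φ‖ = 1)
    (r : ℝ) (hr0 : 0 < r) (hr1 : r ≤ 1)
    (hb : ∀ j : ℕ, ‖PowerSeries.coeff (j + 2) φ‖ * r ^ (j + 1) ≤ 1) :
    GraphTrivAt φ r := by
  classical
  have hs01 : (Finsupp.single (0 : Fin 2) 1 : Fin 2 →₀ ℕ) ≠ Finsupp.single (1 : Fin 2) 1 := by
    intro h
    have := DFunLike.congr_fun h (1 : Fin 2)
    simp [Finsupp.single_apply] at this
  set f₁ : MvPowerSeries (Fin 2) K :=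
    fun I => if I = Finsupp.single (0 : Fin 2) 1 then 1 else 0 with hf₁
  set f₂ : MvPowerSeries (Fin 2) K :=
    fun I => (if I = Finsupp.single (1 : Fin 2) 1 then 1 else 0) +
      (if I (1 : Fin 2) = 0 then PowerSeries.coeff (I (0 : Fin 2)) φ else 0) with hf₂
  have hco1 : ∀ I, MvPowerSeries.coeff I f₁ =
      if I = Finsupp.single (0 : Fin 2) 1 then 1 else 0 := fun I => rfl
  have hco2 : ∀ I, MvPowerSeries.coeff I f₂ =
      (if I = Finsupp.single (1 : Fin 2) 1 then 1 else 0) +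
      (if I (1 : Fin 2) = 0 then PowerSeries.coeff (I (0 : Fin 2)) φ else 0) := fun I => rfl
  have hz1 : ((0 : Fin 2 →₀ ℕ)) ≠ Finsupp.single (0 : Fin 2) 1 := by
    intro h
    have := DFunLike.congr_fun h (0 : Fin 2)
    simp at this
  have hz2 : ((0 : Fin 2 →₀ ℕ)) ≠ Finsupp.single (1 : Fin 2) 1 := by
    intro h
    have := DFunLike.congr_fun h (1 : Fin 2)
    simp at this
  have e1 : MvPowerSeries.coeff (Finsupp.single (0 : Fin 2) 1) f₁ = 1 := by
    rw [hco1, if_pos rfl]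
  have e2 : MvPowerSeries.coeff (Finsupp.single (1 : Fin 2) 1) f₁ = 0 := by
    rw [hco1, if_neg (Ne.symm hs01)]
  have e3 : MvPowerSeries.coeff (Finsupp.single (0 : Fin 2) 1) f₂ =
      PowerSeries.coeff 1 φ := by
    rw [hco2, if_neg hs01, if_pos (by simp [Finsupp.single_apply])]
    simp
  have e4 : MvPowerSeries.coeff (Finsupp.single (1 : Fin 2) 1) f₂ = 1 := by
    rw [hco2, if_pos rfl, if_neg (by simp [Finsupp.single_apply])]
    simp
  refine ⟨f₁, f₂, ?_, ?_, ?_, ?_, ?_, ?_, ?_, ?_, ?_, ?_⟩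
  · rw [← MvPowerSeries.coeff_zero_eq_constantCoeff_apply, hco1, if_neg hz1]
  · rw [← MvPowerSeries.coeff_zero_eq_constantCoeff_apply, hco2, if_neg hz2]
    simpa [PowerSeries.coeff_zero_eq_constantCoeff] using hφ0
  · intro I
    rw [hco1]
    split
    · rename_i h
      subst h
      simp [Fin.sum_univ_two, Finsupp.single_apply, hr1]
    · simp [le_of_lt hr0]
  · intro I
    rw [hco2]
    rcases eq_or_ne I (Finsupp.single (1 : Fin 2) 1) with h | h
    · subst h
      rw [if_pos rfl, if_neg (by simp [Finsupp.single_apply])]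
      simp [Fin.sum_univ_two, Finsupp.single_apply, hr1]
    · rw [if_neg h, zero_add]
      split
      · rename_i h1
        have hsum : (∑ j : Fin 2, I j) = I 0 := by
          rw [Fin.sum_univ_two, h1, add_zero]
        rw [hsum]
        rcases hn : I (0 : Fin 2) with _ | n
        · simpa [PowerSeries.coeff_zero_eq_constantCoeff, hφ0] using le_of_lt hr0
        · rcases n with _ | j
          · simpa [hc1] using le_refl r
          · have := hb j
            calc ‖PowerSeries.coeff (j + 1 + 1) φ‖ * r ^ (j + 1 + 1)
                = (‖PowerSeries.coeff (j + 2) φ‖ * r ^ (j + 1)) * r := by ring_nf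
              _ ≤ 1 * r := mul_le_mul_of_nonneg_right this (le_of_lt hr0)
              _ = r := one_mul r
      · simp [le_of_lt hr0]
  · rw [e1]; simp
  · rw [e2]; simp
  · rw [e3, hc1]
  · rw [e4]; simp
  · rw [e1, e2, e3, e4]
    simp
  · ext n
    rw [line1, line1, comp, PowerSeries.coeff_mk, PowerSeries.coeff_mk]
    have hmk : (PowerSeries.mk fun m => MvPowerSeries.coeff (Finsupp.single (0 : Fin 2) m) f₁)
        = (PowerSeries.X : PowerSeries K) := by
      ext m
      rw [PowerSeries.coeff_mk, hco1, PowerSeries.coeff_X]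
      by_cases hm : m = 1
      · subst hm; simp
      · rw [if_neg (by
          intro h
          exact hm (by simpa using DFunLike.congr_fun h (0 : Fin 2))), if_neg hm]
    rw [hmk, hco2]
    rw [if_neg (by
      intro h
      have := DFunLike.congr_fun h (1 : Fin 2)
      simp [Finsupp.single_apply] at this), if_pos (by simp [Finsupp.single_apply])]
    simp only [Finsupp.single_eq_same, zero_add]
    rw [Finset.sum_congr rfl (fun k _ => by rw [PowerSeries.coeff_X_pow])]
    simp [Finset.sum_ite_eq, Nat.lt_succ_self]

variable {K : Type*} [NormedField K] [IsUltrametricDist K]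

theorem aux_coeff_pow_eq_zero (u : PowerSeries K) (hu0 : PowerSeries.coeff 0 u = 0) :
    ∀ k n : ℕ, n < k → PowerSeries.coeff n (u ^ k) = 0 := by
  intro k
  induction k with
  | zero => intro n hn; omega
  | succ k ih =>
    intro n hn
    rw [pow_succ', PowerSeries.coeff_mul]
    apply Finset.sum_eq_zero
    rintro ⟨p, q⟩ hpq
    rw [Finset.HasAntidiagonal.mem_antidiagonal] at hpq
    rcases Nat.eq_zero_or_pos p with hp | hp
    · subst hp; simp [hu0]
    · have : q < k := by omega
      simp [ih q this]

theorem aux_coeff_pow_diag (u : PowerSeries K) (hu0 : PowerSeries.coeff 0 u = 0) :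
    ∀ n : ℕ, PowerSeries.coeff n (u ^ n) = (PowerSeries.coeff 1 u) ^ n := by
  intro n
  induction n with
  | zero => simp
  | succ n ih =>
    rw [pow_succ', PowerSeries.coeff_mul]
    rw [Finset.sum_eq_single (1, n)]
    · rw [ih, pow_succ']
    · rintro ⟨p, q⟩ hpq hne
      rw [Finset.HasAntidiagonal.mem_antidiagonal] at hpq
      rcases Nat.eq_zero_or_pos p with hp | hp
      · subst hp; simp [hu0]
      · have : q < n := by
          rcases Nat.lt_or_ge q n with h | h
          · exact h
          · exfalso; apply hne; have : p = 1 := by omega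
            simp_all; omega
        simp [aux_coeff_pow_eq_zero u hu0 n q this]
    · intro h; exfalso; apply h; rw [Finset.HasAntidiagonal.mem_antidiagonal]; simp; omega

theorem aux_pow_bound (u : PowerSeries K) (hu0 : PowerSeries.coeff 0 u = 0)
    (r : ℝ) (hr : 0 < r) (hu : ∀ m, ‖PowerSeries.coeff m u‖ * r ^ m ≤ r) :
    ∀ k n : ℕ, ‖PowerSeries.coeff n (u ^ k)‖ * r ^ n ≤ r ^ k := by
  intro k
  induction k with
  | zero =>
    intro n
    rcases Nat.eq_zero_or_pos n with hn | hn
    · subst hn; simp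
    · rw [pow_zero, PowerSeries.coeff_one, if_neg (by omega)]
      simp [le_of_lt (pow_pos hr n) |>.trans (le_refl _)]
  | succ k ih =>
    intro n
    rw [pow_succ', PowerSeries.coeff_mul]
    have h0 : (0:ℝ) ≤ r ^ (k+1) / r ^ n := by positivity
    calc ‖∑ p ∈ Finset.HasAntidiagonal.antidiagonal n, PowerSeries.coeff p.1 u * PowerSeries.coeff p.2 (u ^ k)‖ * r ^ n
        ≤ (r ^ (k+1) / r ^ n) * r ^ n := by
          apply mul_le_mul_of_nonneg_right _ (le_of_lt (pow_pos hr n))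
          apply IsUltrametricDist.norm_sum_le_of_forall_le_of_nonneg h0
          rintro ⟨p, q⟩ hpq
          rw [Finset.HasAntidiagonal.mem_antidiagonal] at hpq
          rw [norm_mul, le_div_iff₀ (pow_pos hr n), ← hpq, pow_add]
          calc ‖PowerSeries.coeff p u‖ * ‖PowerSeries.coeff q (u ^ k)‖ * (r ^ p * r ^ q)
              = (‖PowerSeries.coeff p u‖ * r ^ p) * (‖PowerSeries.coeff q (u ^ k)‖ * r ^ q) := by ring
            _ ≤ r * r ^ k := by
                apply mul_le_mul (hu p) (ih q) (by positivity) (le_of_lt hr)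
            _ = r ^ (k+1) := by ring
      _ = r ^ (k+1) := div_mul_cancel₀ _ (by positivity)

theorem norm_sub_le_max' (a b : K) : ‖a - b‖ ≤ max ‖a‖ ‖b‖ := by
  rw [sub_eq_add_neg]
  simpa using IsUltrametricDist.norm_add_le_max a (-b)

theorem bound_of_graphTrivAt (φ : PowerSeries K)
    (hφ0 : PowerSeries.constantCoeff φ = 0) (hc1 : ‖PowerSeries.coeff 1 φ‖ = 1)
    (r : ℝ) (hr0 : 0 < r) (hr1 : r ≤ 1) (h : GraphTrivAt φ r) :
    ∀ j : ℕ, ‖PowerSeries.coeff (j + 2) φ‖ * r ^ (j + 1) ≤ 1 := by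
  obtain ⟨f₁, f₂, h01, h02, hN1, hN2, hA, hB, hC, hD, hdet, hcomp⟩ := h
  set u : PowerSeries K := line1 f₁ with hu_def
  set v : PowerSeries K := line1 f₂ with hv_def
  have hsum : ∀ m : ℕ, (∑ j : Fin 2, (Finsupp.single (0 : Fin 2) m) j) = m := by
    intro m
    rw [Fin.sum_univ_two]
    simp [Finsupp.single_apply]
  have hu : ∀ m, ‖PowerSeries.coeff m u‖ * r ^ m ≤ r := by
    intro m
    have h := hN1 (Finsupp.single (0 : Fin 2) m)
    rw [hsum] at h
    rw [hu_def, line1, PowerSeries.coeff_mk]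
    exact h
  have hv : ∀ m, ‖PowerSeries.coeff m v‖ * r ^ m ≤ r := by
    intro m
    have h := hN2 (Finsupp.single (0 : Fin 2) m)
    rw [hsum] at h
    rw [hv_def, line1, PowerSeries.coeff_mk]
    exact h
  have hu0 : PowerSeries.coeff 0 u = 0 := by
    rw [hu_def, line1, PowerSeries.coeff_mk, Finsupp.single_zero,
      MvPowerSeries.coeff_zero_eq_constantCoeff_apply, h01]
  have hucoeff : ∀ m, PowerSeries.coeff m u =
      MvPowerSeries.coeff (Finsupp.single (0 : Fin 2) m) f₁ := by
    intro m; rw [hu_def, line1, PowerSeries.coeff_mk]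
  have hvcoeff : ∀ m, PowerSeries.coeff m v =
      MvPowerSeries.coeff (Finsupp.single (0 : Fin 2) m) f₂ := by
    intro m; rw [hv_def, line1, PowerSeries.coeff_mk]
  -- coefficients of v via comp
  have hvn : ∀ n, PowerSeries.coeff n v =
      ∑ k ∈ Finset.range (n + 1),
        PowerSeries.coeff k φ * PowerSeries.coeff n (u ^ k) := by
    intro n
    rw [hcomp, comp, PowerSeries.coeff_mk]
  -- ‖a₁‖ = 1
  have hC1 : MvPowerSeries.coeff (Finsupp.single (0 : Fin 2) 1) f₂ =
      PowerSeries.coeff 1 φ * PowerSeries.coeff 1 u := by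
    rw [← hvcoeff, hvn 1]
    rw [Finset.sum_range_succ, Finset.sum_range_one]
    simp [hu0]
  have ha1 : ‖PowerSeries.coeff 1 u‖ = 1 := by
    by_contra hne
    have hlt : ‖PowerSeries.coeff 1 u‖ < 1 := by
      have : ‖PowerSeries.coeff 1 u‖ ≤ 1 := by rw [hucoeff]; exact hA
      cases lt_or_eq_of_le this with
      | inl h => exact h
      | inr h => exact absurd h hne
    have hCn : ‖MvPowerSeries.coeff (Finsupp.single (0 : Fin 2) 1) f₂‖ < 1 := by
      rw [hC1, norm_mul, hc1, one_mul]; exact hlt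
    have h1 : ‖MvPowerSeries.coeff (Finsupp.single (0 : Fin 2) 1) f₁ *
        MvPowerSeries.coeff (Finsupp.single (1 : Fin 2) 1) f₂‖ < 1 := by
      rw [norm_mul]
      calc ‖MvPowerSeries.coeff (Finsupp.single (0 : Fin 2) 1) f₁‖ *
            ‖MvPowerSeries.coeff (Finsupp.single (1 : Fin 2) 1) f₂‖
          ≤ ‖PowerSeries.coeff 1 u‖ * 1 := by
            apply mul_le_mul _ hD (norm_nonneg _) (norm_nonneg _)
            rw [hucoeff]
        _ = ‖PowerSeries.coeff 1 u‖ := mul_one _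
        _ < 1 := hlt
    have h2 : ‖MvPowerSeries.coeff (Finsupp.single (1 : Fin 2) 1) f₁ *
        MvPowerSeries.coeff (Finsupp.single (0 : Fin 2) 1) f₂‖ < 1 := by
      rw [norm_mul]
      calc ‖MvPowerSeries.coeff (Finsupp.single (1 : Fin 2) 1) f₁‖ *
            ‖MvPowerSeries.coeff (Finsupp.single (0 : Fin 2) 1) f₂‖
          ≤ 1 * ‖MvPowerSeries.coeff (Finsupp.single (0 : Fin 2) 1) f₂‖ :=
            mul_le_mul_of_nonneg_right hB (norm_nonneg _)
        _ = ‖MvPowerSeries.coeff (Finsupp.single (0 : Fin 2) 1) f₂‖ := one_mul _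
        _ < 1 := hCn
    have := (norm_sub_le_max' _ _).trans_lt (max_lt h1 h2)
    rw [hdet] at this
    exact lt_irrefl 1 this
  -- main strong induction
  have main : ∀ n : ℕ, ‖PowerSeries.coeff n φ‖ * r ^ n ≤ r := by
    intro n
    induction n using Nat.strong_induction_on with
    | _ n ih =>
      rcases Nat.eq_zero_or_pos n with hn | hn
      · subst hn
        simpa [PowerSeries.coeff_zero_eq_constantCoeff, hφ0] using le_of_lt hr0
      · have hsplit := hvn n
        rw [Finset.sum_range_succ] at hsplit
        have hdiag : PowerSeries.coeff n (u ^ n) = (PowerSeries.coeff 1 u) ^ n :=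
          aux_coeff_pow_diag u hu0 n
        have heq : PowerSeries.coeff n φ * (PowerSeries.coeff 1 u) ^ n =
            PowerSeries.coeff n v - ∑ k ∈ Finset.range n,
              PowerSeries.coeff k φ * PowerSeries.coeff n (u ^ k) := by
          rw [hsplit, hdiag]; ring
        have hnorm : ‖PowerSeries.coeff n φ‖ =
            ‖PowerSeries.coeff n v - ∑ k ∈ Finset.range n,
              PowerSeries.coeff k φ * PowerSeries.coeff n (u ^ k)‖ := by
          rw [← heq, norm_mul, norm_pow, ha1, one_pow, mul_one]
        have hSb : ‖∑ k ∈ Finset.range n,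
            PowerSeries.coeff k φ * PowerSeries.coeff n (u ^ k)‖ * r ^ n ≤ r := by
          rw [← le_div_iff₀ (pow_pos hr0 n)] at *
          apply IsUltrametricDist.norm_sum_le_of_forall_le_of_nonneg
            (by positivity)
          intro k hk
          rw [Finset.mem_range] at hk
          rw [le_div_iff₀ (pow_pos hr0 n), norm_mul]
          calc ‖PowerSeries.coeff k φ‖ * ‖PowerSeries.coeff n (u ^ k)‖ * r ^ n
              = ‖PowerSeries.coeff k φ‖ * (‖PowerSeries.coeff n (u ^ k)‖ * r ^ n) := by ring
            _ ≤ ‖PowerSeries.coeff k φ‖ * r ^ k := by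
                apply mul_le_mul_of_nonneg_left (aux_pow_bound u hu0 r hr0 hu k n) (norm_nonneg _)
            _ ≤ r := ih k hk
        calc ‖PowerSeries.coeff n φ‖ * r ^ n
            ≤ max ‖PowerSeries.coeff n v‖ ‖∑ k ∈ Finset.range n,
              PowerSeries.coeff k φ * PowerSeries.coeff n (u ^ k)‖ * r ^ n := by
              apply mul_le_mul_of_nonneg_right _ (le_of_lt (pow_pos hr0 n))
              rw [hnorm]
              exact norm_sub_le_max' _ _
          _ = max (‖PowerSeries.coeff n v‖ * r ^ n) (‖∑ k ∈ Finset.range n,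
              PowerSeries.coeff k φ * PowerSeries.coeff n (u ^ k)‖ * r ^ n) := by
              rw [max_mul_of_nonneg _ _ (le_of_lt (pow_pos hr0 n))]
          _ ≤ r := max_le (hv n) hSb
  intro j
  have := main (j + 2)
  have hstep : (‖PowerSeries.coeff (j + 2) φ‖ * r ^ (j + 1)) * r ≤ 1 * r := by
    calc (‖PowerSeries.coeff (j + 2) φ‖ * r ^ (j + 1)) * r
        = ‖PowerSeries.coeff (j + 2) φ‖ * r ^ (j + 2) := by ring
      _ ≤ r := this
      _ = 1 * r := (one_mul r).symm
  exact le_of_mul_le_mul_right hstep hr0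

end NA

/-- **Proposition 3.6, part 2** (Bost–Chambert-Loir): over a complete discretely valued
nonarchimedean field `K` with valuation ring `R`, if `φ = Σ_{i≥1} c_i X^i ∈ K⟦X⟧` has
positive radius of convergence and `φ'(0)` is a unit of `R` (`‖c₁‖ = 1`), then the size of
the graph of `φ` — i.e. the supremum of the radii `r ∈ (0,1]` at which the graph of `φ` is
analytically trivialized — equals `min(1, exp λ₁)`, where `λ₁` is the first slope of the
Newton polygon of `φ(x)/x`. -/
theorem size_graph_eq_min_one_exp_firstSlope
    {K : Type*} [NontriviallyNormedField K] [CompleteSpace K] [IsUltrametricDist K]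
    [IsDiscreteValuationRing (NA.integers K)]
    (φ : PowerSeries K) (hφ0 : PowerSeries.constantCoeff φ = 0)
    (hc1 : ‖PowerSeries.coeff 1 φ‖ = 1)
    (hρ : ∃ s : ℝ, 0 < s ∧
      Filter.Tendsto (fun i : ℕ => ‖PowerSeries.coeff i φ‖ * s ^ i)
        Filter.atTop (nhds 0)) :
    sSup {r : ℝ | r ∈ Set.Ioc (0 : ℝ) 1 ∧ NA.GraphTrivAt φ r}
      = NA.minOneExp (NA.firstSlope φ) := by
  have hne := NA.firstSlope_ne_bot φ hρ
  set m := NA.minOneExp (NA.firstSlope φ) with hm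
  have hm0 : 0 < m := NA.minOneExp_pos _ hne
  have hm1 : m ≤ 1 := NA.minOneExp_le_one _
  have hiff : ∀ r : ℝ, 0 < r → r ≤ 1 →
      (r ≤ m ↔ ∀ j : ℕ, ‖PowerSeries.coeff (j + 2) φ‖ * r ^ (j + 1) ≤ 1) := by
    intro r hr0 hr1
    rw [hm, NA.le_minOneExp_iff _ hne _ hr0 hr1, NA.firstSlope, le_iInf_iff]
    exact forall_congr' fun j =>
      NA.log_le_slopeTerm_iff _ r (norm_nonneg _) hr0 (j + 1) (Nat.succ_pos j)
  have hmem : m ∈ {r : ℝ | r ∈ Set.Ioc (0:ℝ) 1 ∧ NA.GraphTrivAt φ r} := by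
    refine ⟨⟨hm0, hm1⟩, NA.graphTrivAt_of φ hφ0 hc1 m hm0 hm1 ?_⟩
    exact (hiff m hm0 hm1).1 (le_refl m)
  have hub : ∀ x ∈ {r : ℝ | r ∈ Set.Ioc (0:ℝ) 1 ∧ NA.GraphTrivAt φ r}, x ≤ m := by
    rintro x ⟨⟨hx0, hx1⟩, hgt⟩
    exact (hiff x hx0 hx1).2 (NA.bound_of_graphTrivAt φ hφ0 hc1 x hx0 hx1 hgt)
  exact le_antisymm (csSup_le ⟨m, hmem⟩ hub) (le_csSup ⟨m, hub⟩ hmem)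
end
end

section
/- Let K be a field complete with respect to a nontrivial non-archimedean absolute value, with valuation ring R a discrete valuation ring. Let a ∈ K with 0 < |a| ≤ 1, and let φ = Σ_{i≥1} a^{−i} X^i ∈ K⟦X⟧ (the Taylor series at 0 of T/(a−T)). Then the radius of convergence of φ equals |a|, while the graph of φ is analytically trivialized at radius 1 (so the supremum of the trivialization radii equals 1). In particular, when |a| < 1 the size of the graph of a power series can be strictly larger than its radius of convergence when the assumption φ'(0) ∈ R is omitted. -/
noncomputable section

open Filter PowerSeries

section AuxNA

open PowerSeries

/-- Auxiliary series `σ = X/(1+X) = Σ_{n≥1} (-1)^{n-1} X^n`. -/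
noncomputable def NAsig (K : Type*) [Field K] : PowerSeries K :=
  PowerSeries.mk fun n => if n = 0 then 0 else (-1 : K) ^ (n - 1)

variable {K : Type*} [Field K]

theorem NAsig_mul : NAsig K * (1 + X) = X := by
  ext n
  rw [mul_add, mul_one, map_add]
  match n with
  | 0 => simp [NAsig]
  | 1 => simp [NAsig, PowerSeries.coeff_succ_mul_X]
  | (m+2) => simp [NAsig, PowerSeries.coeff_succ_mul_X, PowerSeries.coeff_X, pow_succ]

theorem NAsig_key (n : ℕ) :
    NAsig K * (∑ k ∈ Finset.range n, NAsig K ^ k) = X - X * NAsig K ^ n := by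
  have hg := geom_sum_mul (NAsig K) n
  linear_combination (NAsig K * (∑ k ∈ Finset.range n, NAsig K ^ k) + (1 - NAsig K ^ n)) *
    NAsig_mul (K := K) - (NAsig K * (1 + X)) * hg

theorem NAsig_const : PowerSeries.constantCoeff (NAsig K) = 0 := by
  rw [← PowerSeries.coeff_zero_eq_constantCoeff]; simp [NAsig]

theorem coeff_X_mul_NAsig_pow (n : ℕ) :
    PowerSeries.coeff n (X * NAsig K ^ n) = 0 := by
  have hX : (X : K⟦X⟧) ∣ NAsig K := PowerSeries.X_dvd_iff.mpr NAsig_const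
  have h : (X : K⟦X⟧) ^ (n + 1) ∣ X * NAsig K ^ n := by
    rw [pow_succ']
    exact mul_dvd_mul dvd_rfl (pow_dvd_pow_of_dvd hX n)
  exact (PowerSeries.X_pow_dvd_iff.mp h) n (Nat.lt_succ_self n)

theorem NAsig_comp_sum (a : K) (ha : a ≠ 0) (φ : PowerSeries K)
    (hφ0 : PowerSeries.constantCoeff φ = 0)
    (hφ : ∀ i : ℕ, 1 ≤ i → PowerSeries.coeff i φ = a⁻¹ ^ i) (n : ℕ) :
    ∑ k ∈ Finset.range (n + 1),
      PowerSeries.coeff k φ * PowerSeries.coeff n ((a • NAsig K) ^ k)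
    = PowerSeries.coeff n (X : K⟦X⟧) := by
  rw [Finset.sum_range_succ']
  have h0 : PowerSeries.coeff 0 φ = 0 := by
    rwa [PowerSeries.coeff_zero_eq_constantCoeff]
  rw [h0, zero_mul, add_zero]
  have hterm : ∀ k : ℕ, PowerSeries.coeff (k+1) φ *
      PowerSeries.coeff n ((a • NAsig K) ^ (k+1))
      = PowerSeries.coeff n (NAsig K ^ (k+1)) := by
    intro k
    rw [hφ (k+1) (Nat.le_add_left 1 k), smul_pow, map_smul, smul_eq_mul, ← mul_assoc,
      ← mul_pow, inv_mul_cancel₀ ha, one_pow, one_mul]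
  simp_rw [hterm]
  rw [← map_sum]
  have hsum : (∑ k ∈ Finset.range n, NAsig K ^ (k+1))
      = NAsig K * (∑ k ∈ Finset.range n, NAsig K ^ k) := by
    rw [Finset.mul_sum]
    exact Finset.sum_congr rfl fun k _ => (pow_succ' (NAsig K) k)
  rw [hsum, NAsig_key, map_sub, coeff_X_mul_NAsig_pow, sub_zero]

/-- First coordinate of the trivialization: `f₁(X₁,X₂) = a·X₁/(1+X₁) + X₂`. -/
noncomputable def NAF1 (a : K) : MvPowerSeries (Fin 2) K := fun I =>
  (if I 1 = 0 then a * PowerSeries.coeff (I 0) (NAsig K) else 0) +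
  (if I = Finsupp.single (1 : Fin 2) 1 then 1 else 0)

/-- Second coordinate of the trivialization: `f₂(X₁,X₂) = X₁`. -/
noncomputable def NAF2 (K : Type*) [Field K] : MvPowerSeries (Fin 2) K := fun I =>
  if I = Finsupp.single (0 : Fin 2) 1 then 1 else 0

theorem NAsingle01_ne : Finsupp.single (0 : Fin 2) 1 ≠ Finsupp.single (1 : Fin 2) 1 := by
  simp [Finsupp.single_eq_single_iff]

theorem NAsingle0n_apply1 (n : ℕ) : (Finsupp.single (0 : Fin 2) n) 1 = 0 :=
  Finsupp.single_eq_of_ne (by decide)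

theorem NAsingle0n_ne (n : ℕ) :
    Finsupp.single (0 : Fin 2) n ≠ Finsupp.single (1 : Fin 2) 1 := by
  intro h
  have := DFunLike.congr_fun h (1 : Fin 2)
  simp [Finsupp.single_apply] at this

theorem coeff_NAF1_10 (a : K) :
    MvPowerSeries.coeff (Finsupp.single (0 : Fin 2) 1) (NAF1 a) = a := by
  rw [MvPowerSeries.coeff_apply, NAF1, if_neg (NAsingle0n_ne 1),
    if_pos (NAsingle0n_apply1 1)]
  simp [Finsupp.single_eq_same, NAsig]

theorem coeff_NAF1_01 (a : K) :
    MvPowerSeries.coeff (Finsupp.single (1 : Fin 2) 1) (NAF1 a) = 1 := by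
  rw [MvPowerSeries.coeff_apply, NAF1, if_pos rfl]
  rw [if_neg (by simp [Finsupp.single_eq_same])]
  simp

theorem coeff_NAF2_10 :
    MvPowerSeries.coeff (Finsupp.single (0 : Fin 2) 1) (NAF2 K) = 1 := by
  rw [MvPowerSeries.coeff_apply, NAF2, if_pos rfl]

theorem coeff_NAF2_01 :
    MvPowerSeries.coeff (Finsupp.single (1 : Fin 2) 1) (NAF2 K) = 0 := by
  rw [MvPowerSeries.coeff_apply, NAF2, if_neg (Ne.symm NAsingle01_ne)]

theorem NAF1_const (a : K) : MvPowerSeries.constantCoeff (NAF1 a) = 0 := by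
  rw [← MvPowerSeries.coeff_zero_eq_constantCoeff, MvPowerSeries.coeff_apply, NAF1]
  have h10 : Finsupp.single (1 : Fin 2) (1 : ℕ) ≠ 0 := by simp
  rw [if_neg (Ne.symm h10)]
  simp [NAsig]

theorem NAF2_const : MvPowerSeries.constantCoeff (NAF2 K) = 0 := by
  rw [← MvPowerSeries.coeff_zero_eq_constantCoeff, MvPowerSeries.coeff_apply, NAF2]
  have h10 : Finsupp.single (0 : Fin 2) (1 : ℕ) ≠ 0 := by simp
  rw [if_neg (Ne.symm h10)]

theorem NAline1_NAF1 (a : K) : NA.line1 (NAF1 a) = a • NAsig K := by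
  ext n
  rw [NA.line1, PowerSeries.coeff_mk, MvPowerSeries.coeff_apply, NAF1,
    if_neg (NAsingle0n_ne n), if_pos (NAsingle0n_apply1 n), add_zero,
    Finsupp.single_eq_same, map_smul, smul_eq_mul]

theorem NAline1_NAF2 : NA.line1 (NAF2 K) = X := by
  ext n
  rw [NA.line1, PowerSeries.coeff_mk, MvPowerSeries.coeff_apply, NAF2,
    PowerSeries.coeff_X]
  have h : (Finsupp.single (0 : Fin 2) n = Finsupp.single (0 : Fin 2) 1) ↔ n = 1 := by
    simp [Finsupp.single_eq_single_iff]
  by_cases hn : n = 1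
  · rw [if_pos (h.mpr hn), if_pos hn]
  · rw [if_neg (fun hh => hn (h.mp hh)), if_neg hn]

end AuxNA

section AuxNorm

variable {K : Type*} [NontriviallyNormedField K]

theorem NAsig_norm_le (n : ℕ) : ‖PowerSeries.coeff n (NAsig K)‖ ≤ 1 := by
  rw [NAsig, PowerSeries.coeff_mk]
  split
  · simp
  · rw [norm_pow, norm_neg, norm_one, one_pow]

theorem NAF1_norm (a : K) (ha1 : ‖a‖ ≤ 1) (I : Fin 2 →₀ ℕ) :
    ‖MvPowerSeries.coeff I (NAF1 a)‖ ≤ 1 := by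
  rw [MvPowerSeries.coeff_apply, NAF1]
  by_cases hI : I = Finsupp.single (1 : Fin 2) 1
  · subst hI
    rw [if_pos rfl, if_neg (by simp [Finsupp.single_eq_same])]
    simp
  · rw [if_neg hI, add_zero]
    split
    · rw [norm_mul]
      calc ‖a‖ * ‖PowerSeries.coeff (I 0) (NAsig K)‖ ≤ 1 * 1 :=
        mul_le_mul ha1 (NAsig_norm_le _) (norm_nonneg _) zero_le_one
      _ = 1 := one_mul 1
    · simp

theorem NAF2_norm (I : Fin 2 →₀ ℕ) : ‖MvPowerSeries.coeff I (NAF2 K)‖ ≤ 1 := by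
  rw [MvPowerSeries.coeff_apply, NAF2]
  split <;> simp

end AuxNorm

/-- **Size can exceed the radius of convergence when `φ'(0) ∉ R`**: over a complete
discretely valued nonarchimedean field `K`, let `a ∈ K` with `0 < ‖a‖ ≤ 1` and let
`φ = Σ_{i≥1} a^{-i} X^i` (the Taylor series at `0` of `T/(a − T)`). Then the radius of
convergence of `φ` equals `‖a‖`, while the graph of `φ` is analytically trivialized at
radius `1`, so the supremum of the trivialization radii `r ∈ (0,1]` equals `1`. -/
theorem size_graph_gt_radius_example
    {K : Type*} [NontriviallyNormedField K] [CompleteSpace K] [IsUltrametricDist K]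
    [IsDiscreteValuationRing (NA.integers K)]
    (a : K) (ha0 : 0 < ‖a‖) (ha1 : ‖a‖ ≤ 1)
    (φ : PowerSeries K) (hφ0 : PowerSeries.constantCoeff φ = 0)
    (hφ : ∀ i : ℕ, 1 ≤ i → PowerSeries.coeff i φ = a⁻¹ ^ i) :
    sSup {s : ℝ | 0 ≤ s ∧
        Filter.Tendsto (fun i : ℕ => ‖PowerSeries.coeff i φ‖ * s ^ i)
          Filter.atTop (nhds 0)} = ‖a‖ ∧
      NA.GraphTrivAt φ 1 ∧
      sSup {r : ℝ | r ∈ Set.Ioc (0 : ℝ) 1 ∧ NA.GraphTrivAt φ r} = 1 := by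
  have hane : a ≠ 0 := norm_pos_iff.mp ha0
  have hcoeff : ∀ i : ℕ, 1 ≤ i → ‖PowerSeries.coeff i φ‖ = ‖a‖⁻¹ ^ i := by
    intro i hi; rw [hφ i hi, norm_pow, norm_inv]
  have htriv : NA.GraphTrivAt φ 1 := by
    refine ⟨NAF1 a, NAF2 K, NAF1_const a, NAF2_const, ?_, ?_, ?_, ?_, ?_, ?_, ?_, ?_⟩
    · intro I; simpa using NAF1_norm a ha1 I
    · intro I; simpa using NAF2_norm I
    · rw [coeff_NAF1_10]; exact ha1
    · rw [coeff_NAF1_01]; exact norm_one.le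
    · rw [coeff_NAF2_10]; exact norm_one.le
    · rw [coeff_NAF2_01]; simp
    · rw [coeff_NAF1_10, coeff_NAF1_01, coeff_NAF2_10, coeff_NAF2_01]
      simp
    · rw [NAline1_NAF2, NAline1_NAF1, NA.comp]
      ext n
      rw [PowerSeries.coeff_mk]
      exact (NAsig_comp_sum a hane φ hφ0 hφ n).symm
  have hset : {s : ℝ | 0 ≤ s ∧
      Filter.Tendsto (fun i : ℕ => ‖PowerSeries.coeff i φ‖ * s ^ i)
        Filter.atTop (nhds 0)} = Set.Ico 0 ‖a‖ := by
    ext s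
    simp only [Set.mem_setOf_eq, Set.mem_Ico]
    constructor
    · rintro ⟨hs0, hs⟩
      refine ⟨hs0, ?_⟩
      by_contra hle
      push_neg at hle
      have h1 := hs.eventually_lt_const zero_lt_one
      obtain ⟨i, hlt, hi1⟩ := (h1.and (Filter.eventually_ge_atTop 1)).exists
      have hbase : (1:ℝ) ≤ ‖a‖⁻¹ * s := by
        have h2 := mul_le_mul_of_nonneg_left hle (inv_nonneg.mpr ha0.le)
        rwa [inv_mul_cancel₀ (ne_of_gt ha0)] at h2
      have h3 : (1:ℝ) ≤ ‖PowerSeries.coeff i φ‖ * s ^ i := by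
        rw [hcoeff i hi1, ← mul_pow]
        calc (1:ℝ) = 1 ^ i := (one_pow i).symm
        _ ≤ (‖a‖⁻¹ * s) ^ i := pow_le_pow_left₀ zero_le_one hbase i
      linarith
    · rintro ⟨hs0, hs⟩
      refine ⟨hs0, ?_⟩
      have hb0 : 0 ≤ ‖a‖⁻¹ * s := mul_nonneg (inv_nonneg.mpr ha0.le) hs0
      have hb1 : ‖a‖⁻¹ * s < 1 := by
        have h4 := (div_lt_one ha0).mpr hs
        rwa [div_eq_inv_mul] at h4
      refine Filter.Tendsto.congr' ?_ (tendsto_pow_atTop_nhds_zero_of_lt_one hb0 hb1)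
      filter_upwards [Filter.eventually_ge_atTop 1] with i hi
      rw [mul_pow, ← hcoeff i hi]
  have hmem : (1:ℝ) ∈ {r : ℝ | r ∈ Set.Ioc (0:ℝ) 1 ∧ NA.GraphTrivAt φ r} :=
    ⟨⟨zero_lt_one, le_refl 1⟩, htriv⟩
  refine ⟨by rw [hset]; exact csSup_Ico ha0, htriv, ?_⟩
  exact le_antisymm (csSup_le ⟨1, hmem⟩ fun x hx => hx.1.2)
    (le_csSup ⟨1, fun x hx => hx.1.2⟩ hmem)
end
end

section
/- Let p be a prime number, let K = ℚ_p with its standard absolute value (so |p| = 1/p), and let φ = Σ_{n≥1} (−1)^{n−1} X^n/n ∈ ℚ_p⟦X⟧ be the formal power series of log(1+X). Then the supremum of the radii r ∈ (0,1] at which the graph of φ is analytically trivialized equals p^{−1/(p−1)}. (This is the paper's assertion that the size of the graph of log(1+x) over a p-adic field equals |p|^{1/(p−1)}.) -/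
noncomputable section

open Filter PowerSeries

/-- Coefficients below `k` of `a^k` vanish when `a` has zero constant term. -/
lemma aux_coeff_pow_eq_zero {K : Type*} [CommRing K] {a : PowerSeries K}
    (ha : PowerSeries.constantCoeff a = 0) {k m : ℕ} (hmk : m < k) :
    PowerSeries.coeff m (a ^ k) = 0 := by
  have : (PowerSeries.X : PowerSeries K) ^ k ∣ a ^ k :=
    pow_dvd_pow_of_dvd (PowerSeries.X_dvd_iff.mpr ha) k
  exact (PowerSeries.X_pow_dvd_iff.mp this) m hmk

/-- The `k`-th coefficient of `a^k` is `a₁^k` when `a` has zero constant term. -/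
lemma aux_coeff_pow_self {K : Type*} [CommRing K] {a : PowerSeries K}
    (ha : PowerSeries.constantCoeff a = 0) (k : ℕ) :
    PowerSeries.coeff k (a ^ k) = (PowerSeries.coeff 1 a) ^ k := by
  induction k with
  | zero => simp
  | succ k ih =>
    rw [pow_succ, PowerSeries.coeff_mul]
    rw [Finset.sum_eq_single (k, 1)]
    · rw [ih, pow_succ]
    · rintro ⟨i, j⟩ hmem hne
      rw [Finset.HasAntidiagonal.mem_antidiagonal] at hmem
      rcases lt_trichotomy i k with h | h | h
      · rw [aux_coeff_pow_eq_zero ha h, zero_mul]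
      · exfalso; apply hne; simp [h]; omega
      · have : j = 0 := by omega
        subst this
        rw [PowerSeries.coeff_zero_eq_constantCoeff, ha, mul_zero]
    · intro h
      exfalso; apply h; rw [Finset.HasAntidiagonal.mem_antidiagonal]

/-- Gauss-norm bound for powers. -/
lemma aux_norm_coeff_pow {K : Type*} [NormedField K] [IsUltrametricDist K]
    {a : PowerSeries K} {r : ℝ} (hr : 0 < r)
    (ha : ∀ m : ℕ, ‖PowerSeries.coeff m a‖ * r ^ m ≤ r) :
    ∀ k : ℕ, 1 ≤ k → ∀ m : ℕ, ‖PowerSeries.coeff m (a ^ k)‖ * r ^ m ≤ r ^ k := by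
  intro k hk
  induction k with
  | zero => omega
  | succ k ih =>
    rcases Nat.eq_or_lt_of_le hk with h | h
    · intro m; rw [show k + 1 = 1 by omega, pow_one, pow_one]; exact ha m
    · have hk1 : 1 ≤ k := by omega
      intro m
      rw [pow_succ, PowerSeries.coeff_mul]
      have hbound : ‖∑ x ∈ Finset.HasAntidiagonal.antidiagonal m,
          PowerSeries.coeff x.1 (a ^ k) * PowerSeries.coeff x.2 a‖
          ≤ r ^ (k + 1) * (r ^ m)⁻¹ := by
        apply IsUltrametricDist.norm_sum_le_of_forall_le_of_nonneg
        · positivity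
        · rintro ⟨i, j⟩ hmem
          rw [Finset.HasAntidiagonal.mem_antidiagonal] at hmem
          have h1 : ‖PowerSeries.coeff i (a ^ k)‖ ≤ r ^ k * (r ^ i)⁻¹ := by
            rw [le_mul_inv_iff₀ (by positivity)]
            exact ih hk1 i
          have h2 : ‖PowerSeries.coeff j a‖ ≤ r * (r ^ j)⁻¹ := by
            rw [le_mul_inv_iff₀ (by positivity)]
            exact ha j
          rw [norm_mul]
          calc ‖PowerSeries.coeff i (a ^ k)‖ * ‖PowerSeries.coeff j a‖
              ≤ (r ^ k * (r ^ i)⁻¹) * (r * (r ^ j)⁻¹) :=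
                mul_le_mul h1 h2 (norm_nonneg _) (by positivity)
            _ = r ^ (k + 1) * (r ^ m)⁻¹ := by
                rw [← hmem, pow_add, pow_add, pow_one]
                field_simp
      calc ‖_‖ * r ^ m ≤ (r ^ (k + 1) * (r ^ m)⁻¹) * r ^ m :=
            mul_le_mul_of_nonneg_right hbound (by positivity)
        _ = r ^ (k + 1) := by field_simp


section AuxPadicGraph
variable {p : ℕ} [hp : Fact p.Prime]




/-- Lower bound for the p-adic norm of a natural number. -/
lemma aux_norm_natCast_ge (n : ℕ) (hn : 1 ≤ n) :
    (p : ℝ) ^ (-(((n : ℝ) - 1) / ((p : ℝ) - 1))) ≤ ‖(n : ℚ_[p])‖ := by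
  have hpp := hp.out
  have hp1 : (1 : ℝ) < p := by exact_mod_cast hpp.one_lt
  set v := padicValNat p n with hv
  set m := n / p ^ v with hmdef
  have hdvd : p ^ v ∣ n := pow_padicValNat_dvd
  have hm : m * p ^ v = n := Nat.div_mul_cancel hdvd
  have hmndvd : ¬ (p ∣ m) := by
    have := Nat.not_dvd_ordCompl hpp (show n ≠ 0 by omega)
    rwa [Nat.factorization_def n hpp] at this
  have hm0 : m ≠ 0 := by
    intro h; rw [h, zero_mul] at hm; omega
  -- ‖m‖ = 1
  have hnm : ‖(m : ℚ_[p])‖ = 1 := by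
    have h1 : ‖((m : ℤ) : ℚ_[p])‖ ≤ 1 := Padic.norm_int_le_one _
    have h2 : ¬ ‖((m : ℤ) : ℚ_[p])‖ < 1 := by
      rw [Padic.norm_intCast_lt_one_iff]
      exact_mod_cast hmndvd
    push_cast at h1 h2 ⊢
    linarith
  have hnpv : ‖((p : ℚ_[p]) ^ v)‖ = (p : ℝ) ^ (-(v : ℝ)) := by
    rw [Padic.norm_p_pow]
    rw [← Real.rpow_intCast (p : ℝ) (-(v : ℤ))]
    norm_num
  have hcast : (n : ℚ_[p]) = (p : ℚ_[p]) ^ v * (m : ℚ_[p]) := by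
    rw [← hm]; push_cast; ring
  rw [hcast, norm_mul, hnm, mul_one, hnpv]
  apply Real.rpow_le_rpow_left_iff (x := (p:ℝ)) hp1 |>.mpr
  -- need -(n-1)/(p-1) ≤ -v, i.e. v*(p-1) ≤ n-1
  have hpvn : (p : ℝ) ^ (v:ℕ) ≤ (n : ℝ) := by
    exact_mod_cast Nat.le_of_dvd (by omega) hdvd
  have hbern : 1 + (v : ℝ) * ((p : ℝ) - 1) ≤ (p : ℝ) ^ (v : ℕ) := by
    have := one_add_mul_le_pow (a := (p : ℝ) - 1) (by linarith) v
    calc 1 + (v:ℝ) * ((p:ℝ)-1) = 1 + (v:ℝ) * ((p:ℝ)-1) := rfl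
    _ ≤ (1 + ((p:ℝ)-1)) ^ v := by linarith [this]
    _ = (p:ℝ) ^ v := by ring_nf
  have hkey : (v : ℝ) * ((p : ℝ) - 1) ≤ (n : ℝ) - 1 := by linarith
  rw [neg_le_neg_iff, le_div_iff₀ (by linarith)]
  linarith


variable {p : ℕ} [hp : Fact p.Prime]

lemma aux_mem (φ : PowerSeries ℚ_[p])
    (hφ0 : PowerSeries.constantCoeff φ = 0)
    (hφ : ∀ n : ℕ, 1 ≤ n →
      PowerSeries.coeff n φ = ((-1 : ℚ_[p]) ^ (n - 1)) / (n : ℚ_[p])) :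
    NA.GraphTrivAt φ ((p : ℝ) ^ (-(1 : ℝ) / ((p : ℝ) - 1))) := by
  have hpp := hp.out
  have hp1 : (1 : ℝ) < p := by exact_mod_cast hpp.one_lt
  set r0 : ℝ := (p : ℝ) ^ (-(1 : ℝ) / ((p : ℝ) - 1)) with hr0def
  have hr0pos : 0 < r0 := Real.rpow_pos_of_pos (by linarith) _
  -- the two series
  set f₁ : MvPowerSeries (Fin 2) ℚ_[p] := MvPowerSeries.X 0 with hf₁def
  set f₂ : MvPowerSeries (Fin 2) ℚ_[p] :=
    (fun I => if I 1 = 0 then PowerSeries.coeff (I 0) φ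
      else if I = Finsupp.single (1 : Fin 2) 1 then 1 else 0) with hf₂def
  have hcoeff₂ : ∀ I : Fin 2 →₀ ℕ, MvPowerSeries.coeff I f₂ =
      if I 1 = 0 then PowerSeries.coeff (I 0) φ
      else if I = Finsupp.single (1 : Fin 2) 1 then 1 else 0 := fun I => rfl
  have hne01 : (0 : Fin 2) ≠ 1 := by decide
  have hne10 : (1 : Fin 2) ≠ 0 := by decide
  -- single evaluations
  have hs0 : ∀ n : ℕ, (Finsupp.single (0 : Fin 2) n) 1 = 0 :=
    fun n => Finsupp.single_eq_of_ne hne01.symm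
  have hs0' : ∀ n : ℕ, (Finsupp.single (0 : Fin 2) n) 0 = n :=
    fun n => Finsupp.single_eq_same
  have hs1 : ∀ n : ℕ, (Finsupp.single (1 : Fin 2) n) 1 = n :=
    fun n => Finsupp.single_eq_same
  have hs1' : ∀ n : ℕ, (Finsupp.single (1 : Fin 2) n) 0 = 0 :=
    fun n => Finsupp.single_eq_of_ne hne10.symm
  -- coefficient of φ at 1
  have hφ1 : PowerSeries.coeff 1 φ = 1 := by
    rw [hφ 1 le_rfl]; norm_num
  -- r0 power formula
  have hr0pow : ∀ n : ℕ, 1 ≤ n → r0 ^ (n - 1) = (p : ℝ) ^ (-(((n : ℝ) - 1) / ((p : ℝ) - 1))) := by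
    intro n hn
    rw [hr0def, ← Real.rpow_natCast ((p : ℝ) ^ (-(1:ℝ)/((p:ℝ)-1))) (n-1),
      ← Real.rpow_mul (by positivity)]
    congr 1
    have : ((n - 1 : ℕ) : ℝ) = (n : ℝ) - 1 := by
      push_cast [Nat.cast_sub hn]; ring
    rw [this]; ring
  -- the key Gauss norm estimate for φ
  have hφnorm : ∀ n : ℕ, ‖PowerSeries.coeff n φ‖ * r0 ^ n ≤ r0 := by
    intro n
    rcases Nat.eq_zero_or_pos n with hn | hn
    · subst hn
      rw [PowerSeries.coeff_zero_eq_constantCoeff, hφ0]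
      simp [hr0pos.le]
    · have hnne : (n : ℚ_[p]) ≠ 0 := by exact_mod_cast Nat.cast_ne_zero.mpr (by omega)
      have hnrm : 0 < ‖(n : ℚ_[p])‖ := norm_pos_iff.mpr hnne
      have hnorm : ‖PowerSeries.coeff n φ‖ = ‖(n : ℚ_[p])‖⁻¹ := by
        rw [hφ n hn, norm_div, norm_pow, norm_neg, norm_one, one_pow, one_div]
      have h1 : r0 ^ (n - 1) ≤ ‖(n : ℚ_[p])‖ := by
        rw [hr0pow n hn]; exact aux_norm_natCast_ge n hn
      have h2 : ‖(n : ℚ_[p])‖⁻¹ * r0 ^ (n - 1) ≤ 1 := by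
        rw [inv_mul_le_iff₀ hnrm, mul_one]; exact h1
      calc ‖PowerSeries.coeff n φ‖ * r0 ^ n
          = (‖(n : ℚ_[p])‖⁻¹ * r0 ^ (n - 1)) * r0 := by
            rw [hnorm, mul_assoc, ← pow_succ, show n - 1 + 1 = n by omega]
        _ ≤ 1 * r0 := mul_le_mul_of_nonneg_right h2 hr0pos.le
        _ = r0 := one_mul _
  refine ⟨f₁, f₂, ?_, ?_, ?_, ?_, ?_, ?_, ?_, ?_, ?_, ?_⟩
  · exact MvPowerSeries.constantCoeff_X 0
  · rw [← MvPowerSeries.coeff_zero_eq_constantCoeff_apply, hcoeff₂]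
    simp [PowerSeries.coeff_zero_eq_constantCoeff, hφ0]
  · -- NormLE f₁
    intro I
    rw [hf₁def, MvPowerSeries.coeff_X]
    split_ifs with h
    · subst h
      rw [norm_one, one_mul, Fin.sum_univ_two, hs0, hs0']
      norm_num
    · simp [hr0pos.le]
  · -- NormLE f₂
    intro I
    rw [hcoeff₂]
    have hsum : ∑ j, I j = I 0 + I 1 := Fin.sum_univ_two I
    split_ifs with h h'
    · rw [hsum, h, add_zero]
      exact hφnorm (I 0)
    · subst h'
      rw [hsum, hs1, hs1']
      norm_num
    · simp [hr0pos.le]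
  · rw [hf₁def, MvPowerSeries.coeff_X, if_pos rfl, norm_one]
  · rw [hf₁def, MvPowerSeries.coeff_X, if_neg (by simp [Finsupp.single_eq_single_iff]), norm_zero]
    norm_num
  · rw [hcoeff₂, if_pos (hs0 1), hs0', hφ1, norm_one]
  · rw [hcoeff₂, if_neg (by rw [hs1]; norm_num), if_pos rfl, norm_one]
  · rw [hf₁def, MvPowerSeries.coeff_X, MvPowerSeries.coeff_X, if_pos rfl,
      if_neg (by simp [Finsupp.single_eq_single_iff]),
      hcoeff₂, hcoeff₂, if_pos (hs0 1), hs0', hφ1,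
      if_neg (by rw [hs1]; norm_num), if_pos rfl]
    norm_num
  · -- line1 f₂ = comp φ (line1 f₁)
    have hline1 : NA.line1 f₁ = PowerSeries.X := by
      ext n
      rw [NA.line1, PowerSeries.coeff_mk, hf₁def, MvPowerSeries.coeff_X,
        PowerSeries.coeff_X]
      simp [Finsupp.single_eq_single_iff]
    have hline2 : NA.line1 f₂ = φ := by
      ext n
      rw [NA.line1, PowerSeries.coeff_mk, hcoeff₂, if_pos (hs0 n), hs0']
    have hcompX : NA.comp φ PowerSeries.X = φ := by
      ext n
      rw [NA.comp, PowerSeries.coeff_mk]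
      simp only [PowerSeries.coeff_X_pow, mul_ite, mul_one, mul_zero]
      rw [Finset.sum_ite_eq (Finset.range (n+1)) n (fun k => PowerSeries.coeff k φ)]
      simp [Finset.mem_range]
    rw [hline1, hline2, hcompX]


variable {p : ℕ} [hp : Fact p.Prime]

lemma aux_ub (φ : PowerSeries ℚ_[p])
    (hφ0 : PowerSeries.constantCoeff φ = 0)
    (hφ : ∀ n : ℕ, 1 ≤ n →
      PowerSeries.coeff n φ = ((-1 : ℚ_[p]) ^ (n - 1)) / (n : ℚ_[p]))
    {r : ℝ} (hr0 : 0 < r) (hr1 : r ≤ 1)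
    (htriv : NA.GraphTrivAt φ r)
    (hgt : (p : ℝ) ^ (-(1 : ℝ) / ((p : ℝ) - 1)) < r) : False := by
  have hpp := hp.out
  have hp1 : (1 : ℝ) < p := by exact_mod_cast hpp.one_lt
  have hp2 : 2 ≤ p := hpp.two_le
  obtain ⟨f₁, f₂, h10, h20, hN1, hN2, hA, hB, hC, hD, hdet, hcomp⟩ := htriv
  have hne01 : (0 : Fin 2) ≠ 1 := by decide
  have hs0 : ∀ n : ℕ, (Finsupp.single (0 : Fin 2) n) 1 = 0 :=
    fun n => Finsupp.single_eq_of_ne hne01.symm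
  have hs0' : ∀ n : ℕ, (Finsupp.single (0 : Fin 2) n) 0 = n :=
    fun n => Finsupp.single_eq_same
  set a : PowerSeries ℚ_[p] := NA.line1 f₁ with hadef
  set b : PowerSeries ℚ_[p] := NA.line1 f₂ with hbdef
  have hcoeffa : ∀ m : ℕ, PowerSeries.coeff m a =
      MvPowerSeries.coeff (Finsupp.single (0 : Fin 2) m) f₁ := by
    intro m; rw [hadef, NA.line1, PowerSeries.coeff_mk]
  have hcoeffb : ∀ m : ℕ, PowerSeries.coeff m b =
      MvPowerSeries.coeff (Finsupp.single (0 : Fin 2) m) f₂ := by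
    intro m; rw [hbdef, NA.line1, PowerSeries.coeff_mk]
  -- Gauss norm bounds for a and b
  have ha : ∀ m : ℕ, ‖PowerSeries.coeff m a‖ * r ^ m ≤ r := by
    intro m
    have := hN1 (Finsupp.single (0 : Fin 2) m)
    rwa [Fin.sum_univ_two, hs0, hs0', add_zero, ← hcoeffa] at this
  have hb : ∀ m : ℕ, ‖PowerSeries.coeff m b‖ * r ^ m ≤ r := by
    intro m
    have := hN2 (Finsupp.single (0 : Fin 2) m)
    rwa [Fin.sum_univ_two, hs0, hs0', add_zero, ← hcoeffb] at this
  -- a has zero constant term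
  have ha0 : PowerSeries.constantCoeff a = 0 := by
    rw [← PowerSeries.coeff_zero_eq_constantCoeff_apply, hcoeffa, Finsupp.single_zero,
      MvPowerSeries.coeff_zero_eq_constantCoeff_apply, h10]
  set α : ℚ_[p] := PowerSeries.coeff 1 a with hαdef
  -- b = comp φ a coefficientwise
  have hbn : ∀ n : ℕ, PowerSeries.coeff n b =
      ∑ k ∈ Finset.range (n + 1),
        PowerSeries.coeff k φ * PowerSeries.coeff n (a ^ k) := by
    intro n
    rw [hcomp, NA.comp, PowerSeries.coeff_mk]
  -- b₁ = α
  have hφ1 : PowerSeries.coeff 1 φ = 1 := by rw [hφ 1 le_rfl]; norm_num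
  have hb1 : PowerSeries.coeff 1 b = α := by
    rw [hbn 1]
    rw [Finset.sum_range_succ, Finset.sum_range_one]
    simp [hφ0, hφ1, hαdef]
  -- ‖α‖ = 1
  have hα1 : ‖α‖ = 1 := by
    have hdet' : ‖α * (MvPowerSeries.coeff (Finsupp.single (1 : Fin 2) 1) f₂ -
        MvPowerSeries.coeff (Finsupp.single (1 : Fin 2) 1) f₁)‖ = 1 := by
      have : α * (MvPowerSeries.coeff (Finsupp.single (1 : Fin 2) 1) f₂ -
          MvPowerSeries.coeff (Finsupp.single (1 : Fin 2) 1) f₁) =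
          MvPowerSeries.coeff (Finsupp.single (0 : Fin 2) 1) f₁ *
            MvPowerSeries.coeff (Finsupp.single (1 : Fin 2) 1) f₂ -
          MvPowerSeries.coeff (Finsupp.single (1 : Fin 2) 1) f₁ *
            MvPowerSeries.coeff (Finsupp.single (0 : Fin 2) 1) f₂ := by
        have e1 : α = MvPowerSeries.coeff (Finsupp.single (0 : Fin 2) 1) f₁ :=
          hcoeffa 1
        have e2 : MvPowerSeries.coeff (Finsupp.single (0 : Fin 2) 1) f₂ = α := by
          rw [← hcoeffb 1, hb1]
        rw [e2, ← e1]; ring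
      rw [this]; exact hdet
    have hsub : ‖MvPowerSeries.coeff (Finsupp.single (1 : Fin 2) 1) f₂ -
        MvPowerSeries.coeff (Finsupp.single (1 : Fin 2) 1) f₁‖ ≤ 1 := by
      rw [sub_eq_add_neg]
      refine (IsUltrametricDist.norm_add_le_max _ _).trans (max_le hD ?_)
      rwa [norm_neg]
    rw [norm_mul] at hdet'
    have hαle : ‖α‖ ≤ 1 := by rw [hcoeffa 1] at hαdef; rw [hαdef]; exact hA
    nlinarith [norm_nonneg α, norm_nonneg (MvPowerSeries.coeff
      (Finsupp.single (1 : Fin 2) 1) f₂ - MvPowerSeries.coeff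
      (Finsupp.single (1 : Fin 2) 1) f₁)]
  -- key quantities
  have hrp1 : (p : ℝ)⁻¹ < r ^ (p - 1) := by
    have : ((p : ℝ) ^ (-(1 : ℝ) / ((p : ℝ) - 1))) ^ (p - 1) < r ^ (p - 1) :=
      pow_lt_pow_left₀ hgt (by positivity) (by omega)
    calc (p : ℝ)⁻¹ = ((p : ℝ) ^ (-(1 : ℝ) / ((p : ℝ) - 1))) ^ (p - 1) := by
          rw [← Real.rpow_natCast ((p : ℝ) ^ (-(1:ℝ)/((p:ℝ)-1))) (p-1),
            ← Real.rpow_mul (by positivity)]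
          rw [show (-(1:ℝ)/((p:ℝ)-1)) * ((p-1 : ℕ) : ℝ) = -1 by
            have : ((p - 1 : ℕ) : ℝ) = (p : ℝ) - 1 := by
              push_cast [Nat.cast_sub (by omega : 1 ≤ p)]; ring
            rw [this]; exact div_mul_cancel₀ (-1 : ℝ) (by linarith)]
          rw [Real.rpow_neg_one]
      _ < r ^ (p - 1) := this
  -- the tail bound C = r * (r^p)⁻¹ < p
  have hC_lt : r * (r ^ p)⁻¹ < p := by
    have h1 : r * (r ^ p)⁻¹ = (r ^ (p - 1))⁻¹ := by
      rw [show p = (p - 1) + 1 by omega, pow_succ]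
      field_simp
      rw [Nat.add_sub_cancel]
    rw [h1]
    rw [inv_lt_comm₀ (by positivity) (by linarith)]
    exact hrp1
  -- norm of the small part of b_p
  have hsmall : ‖∑ k ∈ Finset.range p,
      PowerSeries.coeff k φ * PowerSeries.coeff p (a ^ k)‖
      ≤ r * (r ^ p)⁻¹ := by
    apply IsUltrametricDist.norm_sum_le_of_forall_le_of_nonneg (by positivity)
    intro k hk
    rw [Finset.mem_range] at hk
    rcases Nat.eq_zero_or_pos k with hk0 | hk1
    · subst hk0
      rw [PowerSeries.coeff_zero_eq_constantCoeff_apply, hφ0, zero_mul, norm_zero]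
      positivity
    · -- ‖φ_k‖ = 1 since p ∤ k
      have hknd : ¬ ((p : ℤ) ∣ (k : ℤ)) := by
        intro hdvd
        have : p ∣ k := by exact_mod_cast hdvd
        have := Nat.le_of_dvd hk1 this
        omega
      have hφk : ‖PowerSeries.coeff k φ‖ = 1 := by
        rw [hφ k hk1, norm_div, norm_pow, norm_neg, norm_one, one_pow, one_div]
        have h1 : ‖((k : ℤ) : ℚ_[p])‖ ≤ 1 := Padic.norm_int_le_one _
        have h2 : ¬ ‖((k : ℤ) : ℚ_[p])‖ < 1 := by
          rw [Padic.norm_intCast_lt_one_iff]; exact hknd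
        push_cast at h1 h2
        have : ‖(k : ℚ_[p])‖ = 1 := le_antisymm h1 (not_lt.mp h2)
        rw [this, inv_one]
      have hak : ‖PowerSeries.coeff p (a ^ k)‖ ≤ r ^ k * (r ^ p)⁻¹ := by
        rw [le_mul_inv_iff₀ (by positivity)]
        exact aux_norm_coeff_pow hr0 ha k hk1 p
      rw [norm_mul, hφk, one_mul]
      calc ‖PowerSeries.coeff p (a ^ k)‖ ≤ r ^ k * (r ^ p)⁻¹ := hak
        _ ≤ r * (r ^ p)⁻¹ := by
          apply mul_le_mul_of_nonneg_right _ (by positivity)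
          calc r ^ k ≤ r ^ 1 := pow_le_pow_of_le_one hr0.le hr1 hk1
            _ = r := pow_one r
  -- the main term
  have hφp : ‖PowerSeries.coeff p φ * α ^ p‖ = p := by
    rw [norm_mul, norm_pow, hα1, one_pow, mul_one]
    rw [hφ p (by omega), norm_div, norm_pow, norm_neg, norm_one, one_pow, one_div]
    rw [show ((p : ℕ) : ℚ_[p]) = (p : ℚ_[p]) by norm_cast, Padic.norm_p, inv_inv]
  -- b_p decomposition
  have hbp : PowerSeries.coeff p b =
      (∑ k ∈ Finset.range p,
        PowerSeries.coeff k φ * PowerSeries.coeff p (a ^ k)) +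
      PowerSeries.coeff p φ * α ^ p := by
    rw [hbn p, Finset.sum_range_succ, aux_coeff_pow_self ha0, hαdef]
  -- ‖b_p‖ ≥ p
  have hbig : (p : ℝ) ≤ ‖PowerSeries.coeff p b‖ := by
    have heq : PowerSeries.coeff p φ * α ^ p =
        PowerSeries.coeff p b + (- ∑ k ∈ Finset.range p,
          PowerSeries.coeff k φ * PowerSeries.coeff p (a ^ k)) := by
      rw [hbp]; ring
    have := IsUltrametricDist.norm_add_le_max (PowerSeries.coeff p b)
      (- ∑ k ∈ Finset.range p,
        PowerSeries.coeff k φ * PowerSeries.coeff p (a ^ k))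
    rw [← heq, hφp, norm_neg] at this
    rcases max_cases ‖PowerSeries.coeff p b‖
      (‖∑ k ∈ Finset.range p,
        PowerSeries.coeff k φ * PowerSeries.coeff p (a ^ k)‖) with
      ⟨h1, _⟩ | ⟨h1, _⟩
    · rw [h1] at this; exact this
    · rw [h1] at this; linarith
  -- contradiction
  have hfinal := hb p
  have : (p : ℝ) * r ^ p ≤ r :=
    le_trans (mul_le_mul_of_nonneg_right hbig (by positivity)) hfinal
  have hlast : (p : ℝ) ≤ r * (r ^ p)⁻¹ := by
    rw [le_mul_inv_iff₀ (by positivity)]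
    linarith
  linarith


end AuxPadicGraph

/-- **The size of the graph of `log(1+x)` over `ℚ_p` equals `p^{-1/(p-1)}`**
(Bost–Chambert-Loir): for the formal power series `φ = Σ_{n≥1} (-1)^{n-1} X^n / n` of
`log(1+X)` over the `p`-adic numbers, the supremum of the radii `r ∈ (0,1]` at which the
graph of `φ` is analytically trivialized equals `p^{-1/(p-1)} = |p|^{1/(p-1)}`. -/
theorem size_graph_log_one_add
    {p : ℕ} [Fact p.Prime]
    (φ : PowerSeries ℚ_[p]) (hφ0 : PowerSeries.constantCoeff φ = 0)
    (hφ : ∀ n : ℕ, 1 ≤ n →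
      PowerSeries.coeff n φ = ((-1 : ℚ_[p]) ^ (n - 1)) / (n : ℚ_[p])) :
    sSup {r : ℝ | r ∈ Set.Ioc (0 : ℝ) 1 ∧ NA.GraphTrivAt φ r}
      = (p : ℝ) ^ (-(1 : ℝ) / ((p : ℝ) - 1)) := by
  have hpp : p.Prime := Fact.out
  have hp1 : (1 : ℝ) < p := by exact_mod_cast hpp.one_lt
  have hr0pos : 0 < (p : ℝ) ^ (-(1 : ℝ) / ((p : ℝ) - 1)) :=
    Real.rpow_pos_of_pos (by linarith) _
  have hr0le1 : (p : ℝ) ^ (-(1 : ℝ) / ((p : ℝ) - 1)) ≤ 1 :=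
    Real.rpow_le_one_of_one_le_of_nonpos hp1.le
      (div_nonpos_of_nonpos_of_nonneg (by norm_num) (by linarith))
  apply IsGreatest.csSup_eq
  constructor
  · exact ⟨⟨hr0pos, hr0le1⟩, aux_mem φ hφ0 hφ⟩
  · rintro x ⟨⟨hx0, hx1⟩, hxt⟩
    by_contra hlt
    push_neg at hlt
    exact aux_ub φ hφ0 hφ hx0 hx1 hxt hlt
end
end

section
/- Let S be a nonempty finite set and let Q : S × S → ℝ be a symmetric matrix such that Q(s,t) ≥ 0 whenever s ≠ t. Assume there exists m : S → ℝ with m(s) > 0 for all s ∈ S and Σ_{s∈S} m(s)·Q(s,t) = 0 for every t ∈ S. Let T ⊆ S, and assume that every nonempty subset C of S satisfying Q(s,t) = 0 for all s ∈ C and all t ∈ S∖C contains at least one element not belonging to T. Let d : S → ℝ satisfy d(t) ≥ 0 for every t ∈ T, and let c : S → ℝ satisfy c(s) = 0 for every s ∉ T and Σ_{s∈S} c(s)·Q(s,t) = −d(t) for every t ∈ T. Then c(s) ≥ 0 for all s ∈ S. -/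
/-- **Discrete maximum principle** (combinatorial core of Proposition 5.1 of
Bost–Chambert-Loir): let `S` be a nonempty finite set, `Q : S × S → ℝ` a symmetric matrix
with nonnegative off-diagonal entries admitting a strictly positive vector `m` in its
kernel (`Σ_s m(s) Q(s,t) = 0` for all `t`). Let `T ⊆ S` be such that every nonempty
"connected component for `Q`" (a nonempty `C ⊆ S` with `Q(s,t) = 0` whenever `s ∈ C`,
`t ∉ C`) contains an element outside `T`. If `d : S → ℝ` is nonnegative on `T` and
`c : S → ℝ` vanishes outside `T` and satisfies `Σ_s c(s) Q(s,t) = −d(t)` for all `t ∈ T`,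
then `c` is nonnegative everywhere. -/
theorem discrete_maximum_principle
    {S : Type*} [Fintype S] [Nonempty S]
    (Q : S → S → ℝ)
    (hsym : ∀ s t, Q s t = Q t s)
    (hoff : ∀ s t, s ≠ t → 0 ≤ Q s t)
    (m : S → ℝ) (hm : ∀ s, 0 < m s)
    (hker : ∀ t, ∑ s, m s * Q s t = 0)
    (T : Set S)
    (hconn : ∀ C : Set S, C.Nonempty → (∀ s ∈ C, ∀ t ∉ C, Q s t = 0) → ∃ s ∈ C, s ∉ T)
    (d : S → ℝ) (hd : ∀ t ∈ T, 0 ≤ d t)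
    (c : S → ℝ) (hc0 : ∀ s ∉ T, c s = 0)
    (hceq : ∀ t ∈ T, ∑ s, c s * Q s t = -d t) :
    ∀ s, 0 ≤ c s := by
  set f : S → ℝ := fun s => c s / m s with hf
  have hcfm : ∀ s, c s = f s * m s := fun s => by
    simp [hf, div_mul_cancel₀ _ (hm s).ne']
  obtain ⟨s0, hs0⟩ := Finite.exists_min f
  by_cases hneg : 0 ≤ f s0
  · intro s
    rw [hcfm s]
    exact mul_nonneg (le_trans hneg (hs0 s)) (hm s).le
  · exfalso
    push_neg at hneg
    set C : Set S := {s | f s = f s0} with hC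
    have hCne : C.Nonempty := ⟨s0, rfl⟩
    have hCT : ∀ s ∈ C, s ∈ T := by
      intro s hs
      by_contra hsT
      have : f s = 0 := by simp [hf, hc0 s hsT]
      rw [hs] at this
      exact absurd this hneg.ne
    -- key: for t ∈ C and s ∉ C, Q s t = 0
    have hkey : ∀ t ∈ C, ∀ s, s ∉ C → Q s t = 0 := by
      intro t ht s hs
      have hsum : ∑ s, (f s - f s0) * m s * Q s t = ∑ s, c s * Q s t := by
        have : ∑ s, (f s - f s0) * m s * Q s t
            = ∑ s, c s * Q s t - f s0 * ∑ s, m s * Q s t := by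
          rw [Finset.mul_sum, ← Finset.sum_sub_distrib]
          refine Finset.sum_congr rfl fun x _ => by rw [hcfm x]; ring
        rw [this, hker t, mul_zero, sub_zero]
      have hle : ∑ s, (f s - f s0) * m s * Q s t ≤ 0 := by
        rw [hsum, hceq t (hCT t ht)]
        simpa using hd t (hCT t ht)
      have hnn : ∀ x ∈ Finset.univ, 0 ≤ (f x - f s0) * m x * Q x t := by
        intro x _
        rcases eq_or_ne x t with rfl | hxt
        · have : f x - f s0 = 0 := sub_eq_zero.mpr ht
          simp [this]
        · exact mul_nonneg (mul_nonneg (sub_nonneg.mpr (hs0 x)) (hm x).le)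
            (hoff x t hxt)
      have hzero : ∀ x ∈ Finset.univ, (f x - f s0) * m x * Q x t = 0 := by
        rw [← Finset.sum_eq_zero_iff_of_nonneg hnn]
        exact le_antisymm hle (Finset.sum_nonneg hnn)
      have := hzero s (Finset.mem_univ s)
      have hfs : f s - f s0 ≠ 0 := fun h => hs (sub_eq_zero.mp h)
      have := mul_eq_zero.mp this
      rcases this with h | h
      · exact absurd (mul_eq_zero.mp h)
          (by push_neg; exact ⟨hfs, (hm s).ne'⟩)
      · exact h
    obtain ⟨s, hsC, hsT⟩ := hconn C hCne (fun s hs t htC => by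
      rw [hsym]; exact hkey s hs t htC)
    exact hsT (hCT s hsC)
end
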